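/- Let A be a Dedekind domain and B a free A-algebra of finite rank n. Then B has an A-basis of the form {1, ω₂, …, ωₙ}. -/

import Mathlib

open IsDedekindDomain


open IsDedekindDomain

/-- Stable range step: a unimodular vector of length `n+3` over a Dedekind domain can be
shortened to a unimodular vector of length `n+2` by adding multiples of the last coordinate. -/
lemma sr_step {A : Type*} [CommRing A] [IsDedekindDomain A] {n : ℕ} (c : Fin (n+3) → A)
    (hc : Ideal.span (Set.range c) = ⊤) :
    ∃ t : Fin (n+2) → A,
      Ideal.span (Set.range fun i : Fin (n+2) =>
        c i.castSucc + t i * c (Fin.last (n+2))) = ⊤ := by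
  classical
  set a := c (Fin.last (n+2)) with ha
  by_cases ha0 : a = 0
  · refine ⟨0, top_unique ?_⟩
    rw [← hc]
    refine Ideal.span_le.2 ?_
    rintro x ⟨j, rfl⟩
    refine Fin.lastCases ?_ (fun i => ?_) j
    · rw [← ha, ha0]; exact Ideal.zero_mem _
    · have : c i.castSucc = c i.castSucc + (0 : Fin (n+2) → A) i * a := by simp
      rw [this]
      exact Ideal.subset_span ⟨i, rfl⟩
  · -- choose t0 so that b0 ≠ 0
    set t0 : A := if c 0 = 0 then 1 else 0 with ht0
    set b0 : A := c 0 + t0 * a with hb0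
    have hb0ne : b0 ≠ 0 := by
      rw [hb0, ht0]
      by_cases h : c 0 = 0 <;> simp [h, ha0]
    have hSfin : {v : HeightOneSpectrum A | v.asIdeal ∣ Ideal.span {b0}}.Finite :=
      Ideal.finite_factors (by simpa [Ideal.span_singleton_eq_bot] using hb0ne)
    set s : Finset (HeightOneSpectrum A) := hSfin.toFinset with hs
    set w : HeightOneSpectrum A → A := fun v => if c 1 ∈ v.asIdeal then 1 else 0 with hw
    have hwv : ∀ v : HeightOneSpectrum A, a ∉ v.asIdeal → c 1 + w v * a ∉ v.asIdeal := by
      intro v hav hmem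
      by_cases h : c 1 ∈ v.asIdeal
      · simp only [hw, if_pos h, one_mul] at hmem
        exact hav (by simpa using Ideal.sub_mem _ hmem h)
      · simp only [hw, if_neg h, zero_mul, add_zero] at hmem
        exact h hmem
    obtain ⟨t1, ht1⟩ := IsDedekindDomain.exists_forall_sub_mem_ideal
      (s := s) (fun v => v.asIdeal) (fun _ => 1)
      (fun v _ => Ideal.prime_of_isPrime v.ne_bot v.isPrime)
      (fun v _ v' _ hne => fun h => hne (HeightOneSpectrum.ext h))
      (fun v => w v)
    refine ⟨fun i => if i = 0 then t0 else if i = 1 then t1 else 0, ?_⟩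
    by_contra h
    obtain ⟨m, hm, hle⟩ := Ideal.exists_le_maximal _ h
    have hd : ∀ i : Fin (n+2),
        c i.castSucc + (if i = 0 then t0 else if i = 1 then t1 else 0) * a ∈ m :=
      fun i => hle (Ideal.subset_span ⟨i, rfl⟩)
    by_cases ham : a ∈ m
    · have : ∀ j, c j ∈ m := by
        intro j
        refine Fin.lastCases (by rwa [← ha]) (fun i => ?_) j
        have := hd i
        have h2 : c i.castSucc =
            (c i.castSucc + (if i = 0 then t0 else if i = 1 then t1 else 0) * a)
            - (if i = 0 then t0 else if i = 1 then t1 else 0) * a := by ring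
        rw [h2]
        exact Ideal.sub_mem _ this (Ideal.mul_mem_left _ _ ham)
      refine hm.ne_top (top_unique ?_)
      rw [← hc]
      refine Ideal.span_le.2 ?_
      rintro x ⟨j, rfl⟩
      exact this j
    · -- a ∉ m; then b0 ∈ m, so m ∈ s
      have hb0m : b0 ∈ m := by
        have := hd 0
        simpa [hb0] using this
      have hmbot : m ≠ ⊥ := by
        intro hbot
        rw [hbot] at hb0m
        exact hb0ne (by simpa using hb0m)
      set v : HeightOneSpectrum A := ⟨m, hm.isPrime, hmbot⟩ with hv
      have hvs : v ∈ s := by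
        rw [hs, Set.Finite.mem_toFinset]
        exact Ideal.dvd_iff_le.2 (by simpa [Ideal.span_le] using hb0m)
      have h1m : c 1 + t1 * a ∈ m := by
        have := hd 1
        simpa using this
      have hsub : t1 - w v ∈ m := by simpa using ht1 v hvs
      refine hwv v ham ?_
      have : c 1 + w v * a = (c 1 + t1 * a) - (t1 - w v) * a := by ring
      rw [this]
      exact Ideal.sub_mem _ h1m (Ideal.mul_mem_right _ _ hsub)

lemma exists_unimodular_matrix {A : Type*} [CommRing A] [IsDedekindDomain A] :
    ∀ n (c : Fin (n+1) → A), Ideal.span (Set.range c) = ⊤ →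
      ∃ M : Matrix (Fin (n+1)) (Fin (n+1)) A, IsUnit M.det ∧ ∀ i, M i 0 = c i := by
  intro n
  induction n with
  | zero =>
    intro c hc
    have h1 : IsUnit (c 0) := by
      rw [← Ideal.span_singleton_eq_top]
      have hr : Set.range c = {c 0} := by
        rw [show c = fun _ => c 0 from funext fun i => congrArg c (Fin.ext (Nat.lt_one_iff.mp i.isLt))]
        exact Set.range_const
      rwa [hr] at hc
    refine ⟨Matrix.of fun _ _ => c 0, ?_, fun i => ?_⟩
    · rwa [Matrix.det_fin_one]
    · exact congrArg c (Fin.ext (Nat.lt_one_iff.mp i.isLt)).symm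
  | succ m ih =>
    match m, ih with
    | 0, _ =>
      intro c hc
      have h1 : (1 : A) ∈ Ideal.span (Set.range c) := by rw [hc]; trivial
      rw [Ideal.span, Submodule.mem_span_range_iff_exists_fun] at h1
      obtain ⟨g, hg⟩ := h1
      rw [Fin.sum_univ_two] at hg
      refine ⟨!![c 0, -(g 1); c 1, g 0], ?_, fun i => ?_⟩
      · have : (!![c 0, -(g 1); c 1, g 0]).det = 1 := by
          rw [Matrix.det_fin_two_of]
          simp only [smul_eq_mul] at hg
          linear_combination hg
        rw [this]; exact isUnit_one
      · fin_cases i <;> simp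
    | k+1, ih =>
      intro c hc
      obtain ⟨t, ht⟩ := sr_step c hc
      set a : A := c (Fin.last (k+2)) with ha
      set c' : Fin (k+2) → A := fun i => c i.castSucc + t i * a with hc'
      obtain ⟨M', hdet', hcol'⟩ := ih c' ht
      set e : Fin (k+2) ⊕ Fin 1 ≃ Fin (k+3) := finSumFinEquiv with he
      set N : Matrix (Fin (k+3)) (Fin (k+3)) A :=
        (Matrix.reindex e e)
          (Matrix.fromBlocks M' 0 (Matrix.of fun _ j => if j = 0 then a else 0) 1) with hN
      set u : Fin (k+3) → A := fun i => if h : (i : ℕ) < k + 2 then -(t ⟨i, h⟩) else 0 with hu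
      set L : Matrix (Fin (k+3)) (Fin (k+3)) A :=
        1 + Matrix.of (fun i j => if j = Fin.last (k+2) then u i else 0) with hL
      have hulast : u (Fin.last (k+2)) = 0 := by
        rw [hu]; exact dif_neg (by simp)
      have hLdet : L.det = 1 := by
        have htri : L.BlockTriangular id := by
          intro i j hij
          have hij' : j < i := hij
          rw [hL]
          simp only [Matrix.add_apply, Matrix.of_apply, Matrix.one_apply]
          rw [if_neg hij'.ne', if_neg, add_zero]
          intro hjlast
          exact absurd (hjlast ▸ hij' : Fin.last (k+2) < i) (not_lt.2 (Fin.le_last i))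
        rw [Matrix.det_of_upperTriangular htri]
        refine Finset.prod_eq_one fun i _ => ?_
        rw [hL]
        simp only [Matrix.add_apply, Matrix.of_apply, Matrix.one_apply_eq]
        by_cases h : i = Fin.last (k+2)
        · rw [if_pos h, h, hulast, add_zero]
        · rw [if_neg h, add_zero]
      have hNlast0 : N (Fin.last (k+2)) 0 = a := by
        rw [hN]
        have h1 : e.symm (Fin.last (k+2)) = Sum.inr 0 := by
          rw [he, Equiv.symm_apply_eq, finSumFinEquiv_apply_right]
          exact Fin.ext (by simp)
        have h2 : e.symm (0 : Fin (k+3)) = Sum.inl 0 := by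
          rw [he, Equiv.symm_apply_eq, finSumFinEquiv_apply_left]
          exact Fin.ext (by simp)
        simp [Matrix.reindex_apply, Matrix.submatrix_apply, h1, h2]
      have hNcast0 : ∀ i : Fin (k+2), N i.castSucc 0 = c' i := by
        intro i
        rw [hN]
        have h1 : e.symm i.castSucc = Sum.inl i := by
          rw [he, Equiv.symm_apply_eq, finSumFinEquiv_apply_left]
          exact Fin.ext (by simp)
        have h2 : e.symm (0 : Fin (k+3)) = Sum.inl 0 := by
          rw [he, Equiv.symm_apply_eq, finSumFinEquiv_apply_left]
          exact Fin.ext (by simp)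
        simp [Matrix.reindex_apply, Matrix.submatrix_apply, h1, h2, hcol' i]
      refine ⟨L * N, ?_, fun i => ?_⟩
      · rw [Matrix.det_mul, hLdet, one_mul, hN, Matrix.det_reindex_self,
          Matrix.det_fromBlocks_zero₁₂, Matrix.det_one, mul_one]
        exact hdet'
      · have hmul : (L * N) i 0 = N i 0 + u i * N (Fin.last (k+2)) 0 := by
          rw [Matrix.mul_apply, hL]
          simp only [Matrix.add_apply, Matrix.of_apply, Matrix.one_apply, ite_mul, one_mul,
            zero_mul, add_mul]
          rw [Finset.sum_add_distrib, Finset.sum_ite_eq, Finset.sum_ite_eq']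
          simp
        rw [hmul]
        refine Fin.lastCases ?_ (fun j => ?_) i
        · rw [hNlast0, hulast, zero_mul, add_zero]
        · rw [hNcast0, hNlast0, hc']
          have hj : u j.castSucc = -(t j) := by
            have hlt : ((j.castSucc : Fin (k+3)) : ℕ) < k + 2 := by simp
            simp only [hu]
            rw [dif_pos hlt]
            exact neg_inj.2 (congrArg t (Fin.ext (by simp)))
          rw [hj]; ring


/-- Let `A` be a Dedekind domain and `B` a free `A`-algebra of finite rank `n`.
Then `B` has an `A`-basis of the form `{1, ω₂, …, ωₙ}`. -/
theorem basis_starting_with_one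
    (A B : Type*) [CommRing A] [IsDedekindDomain A] [CommRing B] [Algebra A B]
    (hinj : Function.Injective (algebraMap A B))
    [Module.Free A B] (n : ℕ) (hn : 0 < n) (hrank : Module.finrank A B = n) :
    ∃ b : Module.Basis (Fin n) A B, b ⟨0, hn⟩ = 1 := by
  classical
  have hfin : Module.Finite A B := Module.finite_of_finrank_pos (hrank ▸ hn)
  obtain ⟨m, rfl⟩ : ∃ m, n = m + 1 := ⟨n - 1, by omega⟩
  set b : Module.Basis (Fin (m+1)) A B := Module.finBasisOfFinrankEq A B hrank with hb
  set c : Fin (m+1) → A := fun i => b.repr 1 i with hcdef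
  have hsum : ∑ i, c i • b i = 1 := b.sum_repr 1
  set I : Ideal A := Ideal.span (Set.range c) with hI
  have hIB : (⊤ : Submodule A B) ≤ I • ⊤ := by
    intro x _
    have hx : x = ∑ i, c i • (x * b i) := by
      calc x = x * 1 := (mul_one x).symm
        _ = x * ∑ i, c i • b i := by rw [hsum]
        _ = ∑ i, c i • (x * b i) := by
            rw [Finset.mul_sum]
            exact Finset.sum_congr rfl fun i _ => (Algebra.mul_smul_comm _ _ _)
    rw [hx]
    exact Submodule.sum_mem _ fun i _ =>
      Submodule.smul_mem_smul (Ideal.subset_span ⟨i, rfl⟩) Submodule.mem_top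
  have hItop : I = ⊤ := by
    obtain ⟨r, hr1, hr⟩ := Submodule.exists_sub_one_mem_and_smul_eq_zero_of_fg_of_le_smul I
      (⊤ : Submodule A B) (Module.finite_def.mp hfin) hIB
    have hr0 : r = 0 := by
      apply hinj
      rw [map_zero, Algebra.algebraMap_eq_smul_one]
      exact hr 1 Submodule.mem_top
    have hneg : (-1 : A) ∈ I := by simpa [hr0] using hr1
    rw [Ideal.eq_top_iff_one]
    exact (neg_mem_iff).mp hneg
  obtain ⟨M, hdet, hcol⟩ := exists_unimodular_matrix m c hItop
  have hfd : IsUnit (LinearMap.toMatrix b b (Matrix.toLin b b M)).det := by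
    rwa [LinearMap.toMatrix_toLin]
  refine ⟨b.map (LinearEquiv.ofIsUnitDet hfd), ?_⟩
  rw [Module.Basis.map_apply, LinearEquiv.ofIsUnitDet_apply]
  have h0 : (⟨0, hn⟩ : Fin (m+1)) = 0 := rfl
  rw [h0, Matrix.toLin_self]
  calc ∑ j, M j 0 • b j = ∑ j, c j • b j := by simp_rw [hcol]
    _ = 1 := hsum
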